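/- Let P be the probability measure with density 3/2 on [0, 1/3] and 9/4 on [2/3, 7/9] ∪ [8/9, 1]. Then ∫ min((x - 1/6)², (x - 5/6)²) dP = 11/972, and for every two-point set α ⊂ ℝ, ∫ min_{a ∈ α}(x - a)² dP ≥ 11/972; thus {1/6, 5/6} is an optimal set of two-means with V₂ = 11/972. -/

import Mathlib

open MeasureTheory Set

/-- The density: `3/2` on `[0,1/3]`, `9/4` on `[2/3,7/9] ∪ [8/9,1]`, `0` elsewhere. -/
noncomputable def g (x : ℝ) : ℝ :=
  Set.indicator (Set.Icc (0 : ℝ) (1 / 3)) (fun _ => (3 : ℝ) / 2) x +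
    Set.indicator (Set.Icc ((2 : ℝ) / 3) (7 / 9) ∪ Set.Icc ((8 : ℝ) / 9) 1)
      (fun _ => (9 : ℝ) / 4) x

/-- The piecewise uniform probability measure with finitely many pieces. -/
noncomputable def Q : Measure ℝ :=
  MeasureTheory.volume.withDensity (fun x => ENNReal.ofReal (g x))

open scoped ENNReal NNReal

lemma g_nonneg (x : ℝ) : 0 ≤ g x := by
  unfold g
  have h1 : (0:ℝ) ≤ Set.indicator (Set.Icc (0 : ℝ) (1 / 3)) (fun _ => (3 : ℝ) / 2) x :=
    Set.indicator_nonneg (fun _ _ => by norm_num) x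
  have h2 : (0:ℝ) ≤ Set.indicator (Set.Icc ((2 : ℝ) / 3) (7 / 9) ∪ Set.Icc ((8 : ℝ) / 9) 1)
      (fun _ => (9 : ℝ) / 4) x := Set.indicator_nonneg (fun _ _ => by norm_num) x
  linarith

lemma g_meas : Measurable g := by
  unfold g
  exact ((measurable_const.indicator measurableSet_Icc).add
    (measurable_const.indicator ((measurableSet_Icc.union measurableSet_Icc))))

lemma decomp (F : ℝ → ℝ) (hF : Continuous F) :
    ∫ x, F x ∂Q = (3/2) * (∫ x in (0:ℝ)..(1/3), F x) +
      (9/4) * (∫ x in (2/3:ℝ)..(7/9), F x) + (9/4) * (∫ x in (8/9:ℝ)..1, F x) := by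
  have hg : (fun x => ENNReal.ofReal (g x)) = fun x => ((g x).toNNReal : ℝ≥0∞) := rfl
  rw [Q, hg, integral_withDensity_eq_integral_smul (g_meas.real_toNNReal) F]
  have : ∀ x, (g x).toNNReal • F x = g x * F x := by
    intro x
    rw [NNReal.smul_def, Real.coe_toNNReal _ (g_nonneg x), smul_eq_mul]
  simp only [this]
  have hsplit : ∀ x, g x * F x =
      Set.indicator (Set.Icc (0 : ℝ) (1 / 3)) (fun y => (3:ℝ)/2 * F y) x +
      Set.indicator (Set.Icc ((2 : ℝ) / 3) (7 / 9) ∪ Set.Icc ((8 : ℝ) / 9) 1)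
        (fun y => (9:ℝ)/4 * F y) x := by
    intro x
    unfold g
    rw [add_mul]
    congr 1
    · by_cases h : x ∈ Set.Icc (0 : ℝ) (1 / 3)
      · rw [Set.indicator_of_mem h, Set.indicator_of_mem h]
      · rw [Set.indicator_of_notMem h, Set.indicator_of_notMem h, zero_mul]
    · by_cases h : x ∈ Set.Icc ((2 : ℝ) / 3) (7 / 9) ∪ Set.Icc ((8 : ℝ) / 9) 1
      · rw [Set.indicator_of_mem h, Set.indicator_of_mem h]
      · rw [Set.indicator_of_notMem h, Set.indicator_of_notMem h, zero_mul]
  rw [integral_congr_ae (Filter.Eventually.of_forall hsplit)]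
  have hi1 : Integrable (Set.indicator (Set.Icc (0 : ℝ) (1 / 3)) (fun y => (3:ℝ)/2 * F y)) := by
    rw [integrable_indicator_iff measurableSet_Icc]
    exact (continuous_const.mul hF).integrableOn_Icc
  have hi2 : Integrable (Set.indicator (Set.Icc ((2 : ℝ) / 3) (7 / 9) ∪ Set.Icc ((8 : ℝ) / 9) 1)
      (fun y => (9:ℝ)/4 * F y)) := by
    rw [integrable_indicator_iff (measurableSet_Icc.union measurableSet_Icc)]
    exact ((continuous_const.mul hF).integrableOn_Icc).union ((continuous_const.mul hF).integrableOn_Icc)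
  rw [integral_add hi1 hi2, integral_indicator measurableSet_Icc,
    integral_indicator (measurableSet_Icc.union measurableSet_Icc),
    setIntegral_union (f := fun y => (9:ℝ)/4 * F y) ?hd measurableSet_Icc ((continuous_const.mul hF).integrableOn_Icc)
      ((continuous_const.mul hF).integrableOn_Icc)]
  case hd =>
    rw [Set.disjoint_iff]
    rintro x ⟨⟨_, h1⟩, ⟨h2, _⟩⟩
    linarith
  rw [integral_Icc_eq_integral_Ioc, integral_Icc_eq_integral_Ioc, integral_Icc_eq_integral_Ioc,
    ← intervalIntegral.integral_of_le (by norm_num : (0:ℝ) ≤ 1/3),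
    ← intervalIntegral.integral_of_le (by norm_num : (2:ℝ)/3 ≤ 7/9),
    ← intervalIntegral.integral_of_le (by norm_num : (8:ℝ)/9 ≤ 1)]
  rw [intervalIntegral.integral_const_mul, intervalIntegral.integral_const_mul,
    intervalIntegral.integral_const_mul]
  ring

open intervalIntegral in
lemma sqint (l u c : ℝ) : (∫ x in l..u, (x - c)^2) = ((u-c)^3 - (l-c)^3)/3 := by
  rw [integral_comp_sub_right (fun x => x^2) c, integral_pow]
  ring

lemma contMin (a b : ℝ) : Continuous (fun x : ℝ => min ((x-a)^2) ((x-b)^2)) :=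
  Continuous.min (by continuity) (by continuity)

lemma piece_left (a b l u : ℝ) (hab : a ≤ b) (hu : u ≤ (a+b)/2) (hlu : l ≤ u) :
    (∫ x in l..u, min ((x-a)^2) ((x-b)^2)) = ((u-a)^3 - (l-a)^3)/3 := by
  rw [show (∫ x in l..u, min ((x-a)^2) ((x-b)^2)) = ∫ x in l..u, (x-a)^2 from
    intervalIntegral.integral_congr (fun x hx => ?_), sqint]
  rw [Set.uIcc_of_le hlu] at hx
  have h1 := hx.1; have h2 := hx.2
  have key : (x-a)^2 ≤ (x-b)^2 := by nlinarith [mul_nonneg (sub_nonneg.2 hab) (show (0:ℝ) ≤ a + b - 2*x by linarith)]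
  exact min_eq_left key

lemma piece_right (a b l u : ℝ) (hab : a ≤ b) (hl : (a+b)/2 ≤ l) (hlu : l ≤ u) :
    (∫ x in l..u, min ((x-a)^2) ((x-b)^2)) = ((u-b)^3 - (l-b)^3)/3 := by
  rw [show (∫ x in l..u, min ((x-a)^2) ((x-b)^2)) = ∫ x in l..u, (x-b)^2 from
    intervalIntegral.integral_congr (fun x hx => ?_), sqint]
  rw [Set.uIcc_of_le hlu] at hx
  have h1 := hx.1; have h2 := hx.2
  have key : (x-b)^2 ≤ (x-a)^2 := by nlinarith [mul_nonneg (sub_nonneg.2 hab) (show (0:ℝ) ≤ 2*x - a - b by linarith)]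
  exact min_eq_right key

lemma piece_split (a b l u : ℝ) (hab : a ≤ b) (hl : l ≤ (a+b)/2) (hu : (a+b)/2 ≤ u) :
    (∫ x in l..u, min ((x-a)^2) ((x-b)^2)) =
      (((a+b)/2-a)^3 - (l-a)^3)/3 + ((u-b)^3 - ((a+b)/2-b)^3)/3 := by
  rw [← piece_left a b l ((a+b)/2) hab le_rfl hl, ← piece_right a b ((a+b)/2) u hab le_rfl hu]
  exact (intervalIntegral.integral_add_adjacent_intervals
    ((contMin a b).intervalIntegrable _ _) ((contMin a b).intervalIntegrable _ _)).symm

lemma case2 (a b : ℝ) (hd : (0:ℝ) ≤ b - a)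
    (h0 : 0 ≤ (a+b)/2) (h1 : (a+b)/2 ≤ 1/3) :
    11/972 ≤ 3/2 * ((((a+b)/2-a)^3 - (0-a)^3)/3 + ((1/3-b)^3 - ((a+b)/2-b)^3)/3)
      + 9/4 * (((7/9-b)^3 - (2/3-b)^3)/3) + 9/4 * (((1-b)^3 - (8/9-b)^3)/3) := by
  have hs0 : (0:ℝ) ≤ a + b := by linarith
  have hs1 : (0:ℝ) ≤ 2/3 - (a+b) := by linarith
  nlinarith [sq_nonneg (b-5/6), sq_nonneg (b-1/3), mul_nonneg hd (sq_nonneg (b-a)),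
    mul_nonneg hs0 (sq_nonneg (a+b)), mul_nonneg hd hs0, mul_nonneg hd hs1,
    mul_nonneg hs0 hs1, mul_nonneg hd (sq_nonneg (a+b)), mul_nonneg hs0 (sq_nonneg (b-a)),
    mul_nonneg (mul_nonneg hd hs0) hs1, sq_nonneg (a+b), sq_nonneg (b-a)]

lemma case4 (a b : ℝ) (hd : (0:ℝ) ≤ b - a)
    (h2 : 2/3 ≤ (a+b)/2) (h3 : (a+b)/2 ≤ 7/9) :
    11/972 ≤ 3/2 * (((1/3-a)^3 - (0-a)^3)/3)
      + 9/4 * ((((a+b)/2-a)^3 - (2/3-a)^3)/3 + ((7/9-b)^3 - ((a+b)/2-b)^3)/3)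
      + 9/4 * (((1-b)^3 - (8/9-b)^3)/3) := by
  have hs0 : (0:ℝ) ≤ a + b - 4/3 := by linarith
  have hs1 : (0:ℝ) ≤ 14/9 - (a+b) := by linarith
  nlinarith [sq_nonneg (a-1/6), sq_nonneg (b-17/18), mul_nonneg hd (sq_nonneg (b-a)),
    mul_nonneg hs0 (sq_nonneg (a+b-4/3)), mul_nonneg hd hs0, mul_nonneg hd hs1,
    mul_nonneg hs0 hs1, mul_nonneg hd (sq_nonneg (a+b-4/3)), mul_nonneg hs0 (sq_nonneg (b-a)),
    mul_nonneg (mul_nonneg hd hs0) hs1, sq_nonneg (a+b-4/3), sq_nonneg (b-a)]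

lemma case6 (a b : ℝ) (hd : (0:ℝ) ≤ b - a)
    (h4 : 8/9 ≤ (a+b)/2) (h5 : (a+b)/2 ≤ 1) :
    11/972 ≤ 3/2 * (((1/3-a)^3 - (0-a)^3)/3)
      + 9/4 * (((7/9-a)^3 - (2/3-a)^3)/3)
      + 9/4 * ((((a+b)/2-a)^3 - (8/9-a)^3)/3 + ((1-b)^3 - ((a+b)/2-b)^3)/3) := by
  have hs0 : (0:ℝ) ≤ a + b - 16/9 := by linarith
  have hs1 : (0:ℝ) ≤ 2 - (a+b) := by linarith
  nlinarith [sq_nonneg (a-1/6), sq_nonneg (a-13/18), mul_nonneg hd (sq_nonneg (b-a)),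
    mul_nonneg hs0 (sq_nonneg (a+b-16/9)), mul_nonneg hd hs0, mul_nonneg hd hs1,
    mul_nonneg hs0 hs1, mul_nonneg hd (sq_nonneg (a+b-16/9)), mul_nonneg hs0 (sq_nonneg (b-a)),
    mul_nonneg (mul_nonneg hd hs0) hs1, sq_nonneg (a+b-16/9), sq_nonneg (b-a)]

theorem stmt_14 :
    (∫ x, min ((x - 1 / 6) ^ 2) ((x - 5 / 6) ^ 2) ∂Q) = 11 / 972 ∧
    ∀ a₁ a₂ : ℝ, 11 / 972 ≤ ∫ x, min ((x - a₁) ^ 2) ((x - a₂) ^ 2) ∂Q := by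
  constructor
  · rw [decomp _ (contMin (1/6) (5/6)),
      piece_left (1/6) (5/6) 0 (1/3) (by norm_num) (by norm_num) (by norm_num),
      piece_right (1/6) (5/6) (2/3) (7/9) (by norm_num) (by norm_num) (by norm_num),
      piece_right (1/6) (5/6) (8/9) 1 (by norm_num) (by norm_num) (by norm_num)]
    norm_num
  · have key : ∀ a b : ℝ, a ≤ b → 11/972 ≤ ∫ x, min ((x-a)^2) ((x-b)^2) ∂Q := by
      intro a b hab
      have hd : (0:ℝ) ≤ b - a := by linarith
      rw [decomp _ (contMin a b)]
      rcases le_total ((a+b)/2) (1/3) with h1 | h1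
      · rcases le_total ((a+b)/2) 0 with h0 | h0
        · rw [piece_right a b 0 (1/3) hab h0 (by norm_num),
              piece_right a b (2/3) (7/9) hab (by linarith) (by norm_num),
              piece_right a b (8/9) 1 hab (by linarith) (by norm_num)]
          nlinarith [sq_nonneg (b - 1/2)]
        · rw [piece_split a b 0 (1/3) hab h0 h1,
              piece_right a b (2/3) (7/9) hab (by linarith) (by norm_num),
              piece_right a b (8/9) 1 hab (by linarith) (by norm_num)]
          exact case2 a b hd h0 h1
      · rcases le_total ((a+b)/2) (2/3) with h2 | h2
        · rw [piece_left a b 0 (1/3) hab h1 (by norm_num),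
              piece_right a b (2/3) (7/9) hab h2 (by norm_num),
              piece_right a b (8/9) 1 hab (by linarith) (by norm_num)]
          nlinarith [sq_nonneg (a - 1/6), sq_nonneg (b - 5/6)]
        · rcases le_total ((a+b)/2) (7/9) with h3 | h3
          · rw [piece_left a b 0 (1/3) hab (by linarith) (by norm_num),
                piece_split a b (2/3) (7/9) hab h2 h3,
                piece_right a b (8/9) 1 hab (by linarith) (by norm_num)]
            exact case4 a b hd h2 h3
          · rcases le_total ((a+b)/2) (8/9) with h4 | h4
            · rw [piece_left a b 0 (1/3) hab (by linarith) (by norm_num),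
                  piece_left a b (2/3) (7/9) hab h3 (by norm_num),
                  piece_right a b (8/9) 1 hab h4 (by norm_num)]
              nlinarith [sq_nonneg (a - 19/54), sq_nonneg (b - 17/18)]
            · rcases le_total ((a+b)/2) 1 with h5 | h5
              · rw [piece_left a b 0 (1/3) hab (by linarith) (by norm_num),
                    piece_left a b (2/3) (7/9) hab (by linarith) (by norm_num),
                    piece_split a b (8/9) 1 hab h4 h5]
                exact case6 a b hd h4 h5
              · rw [piece_left a b 0 (1/3) hab (by linarith) (by norm_num),
                    piece_left a b (2/3) (7/9) hab (by linarith) (by norm_num),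
                    piece_left a b (8/9) 1 hab h5 (by norm_num)]
                nlinarith [sq_nonneg (a - 1/2)]
    intro a₁ a₂
    rcases le_total a₁ a₂ with h | h
    · exact key a₁ a₂ h
    · have h2 := key a₂ a₁ h
      have e : ∀ x:ℝ, min ((x-a₂)^2) ((x-a₁)^2) = min ((x-a₁)^2) ((x-a₂)^2) :=
        fun x => min_comm _ _
      simp_rw [e] at h2
      exact h2
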